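/- Let f be an X²-type RND function with data (f₀,f₁,f₂,P_f,λ) and auxiliary function h_f, and suppose f is admissible, i.e. there exists (β₁,β₂) with β₁ > β₂, β₂ ≤ λ ≤ β₁, and h_f(β₁,I) ≤ 0 ≤ h_f(β₂,I) for all I ∈ [0,1]. Put f₀₀ := P_f(0), f₁₀ := f₁(0), f₂₀ := f₂(0). Then: (a) f₁(1)² − 4·P_f(1) ≥ 0 (so the roots Z_± of z² + f₁(1)z + P_f(1) are real); and (b) either f₂₀ ≠ 0 and f₁₀² − 4·f₂₀·f₀₀ ≥ 0, or f₂₀ = 0 and f₁₀ < 0, or f₀₀ = f₁₀ = f₂₀ = 0. -/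
import Mathlib


/-- Auxiliary function `h_f(z, I) = P_f(I) + z f₁(I) + z² (I + (1-I) f₂(I))`
of an X²-type RND function. -/
noncomputable def hfun (f₁ f₂ Pf : ℝ → ℝ) (z I : ℝ) : ℝ :=
  Pf I + z * f₁ I + z ^ 2 * (I + (1 - I) * f₂ I)

/-- necessary discriminant conditions for admissibility of an
X²-model: the roots `Z_±` of `z² + f₁(1)z + P_f(1)` are real, and at `I = 0`
one of the three alternatives holds. -/
theorem stmt_8 (f₀ f₁ f₂ Pf : ℝ → ℝ)
    (hc₀ : Continuous f₀) (hc₁ : Continuous f₁) (hc₂ : Continuous f₂)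
    (hcP : Continuous Pf)
    (hP : ∀ I : ℝ, f₀ I = (1 - I) * Pf I + f₀ 1 * I)
    (hadm : ∃ β₁ β₂ : ℝ, β₁ > β₂ ∧ β₂ ≤ f₀ 1 ∧ f₀ 1 ≤ β₁ ∧
      ∀ I ∈ Set.Icc (0:ℝ) 1, hfun f₁ f₂ Pf β₁ I ≤ 0 ∧ 0 ≤ hfun f₁ f₂ Pf β₂ I) :
    0 ≤ f₁ 1 ^ 2 - 4 * Pf 1 ∧
    ((f₂ 0 ≠ 0 ∧ 0 ≤ f₁ 0 ^ 2 - 4 * f₂ 0 * Pf 0) ∨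
      (f₂ 0 = 0 ∧ f₁ 0 < 0) ∨
      (Pf 0 = 0 ∧ f₁ 0 = 0 ∧ f₂ 0 = 0)) := by
  obtain ⟨β₁, β₂, hβ, _, _, h⟩ := hadm
  have h1 := h 1 ⟨zero_le_one, le_refl 1⟩
  have h0 := h 0 ⟨le_refl 0, zero_le_one⟩
  simp only [hfun] at h1 h0
  have h1a := h1.1
  have h0a := h0.1
  have h0b := h0.2
  constructor
  · nlinarith [sq_nonneg (2 * β₁ + f₁ 1)]
  · rcases eq_or_ne (f₂ 0) 0 with h2 | h2
    · rcases lt_trichotomy (f₁ 0) 0 with hf | hf | hf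
      · exact Or.inr (Or.inl ⟨h2, hf⟩)
      · refine Or.inr (Or.inr ⟨?_, hf, h2⟩)
        rw [h2, hf] at h0a h0b
        nlinarith
      · exfalso; nlinarith
    · left
      refine ⟨h2, ?_⟩
      by_contra hd
      push_neg at hd
      have hq1 : 0 < f₂ 0 * (Pf 0 + β₁ * f₁ 0 + β₁ ^ 2 * f₂ 0) := by
        nlinarith [sq_nonneg (2 * f₂ 0 * β₁ + f₁ 0)]
      have hq2 : 0 < f₂ 0 * (Pf 0 + β₂ * f₁ 0 + β₂ ^ 2 * f₂ 0) := by
        nlinarith [sq_nonneg (2 * f₂ 0 * β₂ + f₁ 0)]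
      nlinarith [mul_pos hq1 hq2, mul_nonneg (neg_nonneg.mpr h0a) h0b, sq_nonneg (f₂ 0)]
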